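/- arXiv:2105.00887 — 2 statements merged into one kernel-verified Lean document; each statement's English description precedes it below -/
import Mathlib

section
/- Suppose U ∈ C³(ℝ^d) has global minimum 0 at 0, ‖D²U‖ ≤ L, ‖D³U‖ ≤ L_H, L(T²+Th) ≤ 1/6, T/h ∈ ℕ. Then the strong discretization error of velocity Verlet relative to the exact Hamiltonian flow satisfies max_{s ≤ T} ‖q_s(x,v) − q̃_s(x,v)‖ ≤ h² ((7/45)L‖x‖ + (1547/1800)LT‖v‖ + (1/120)L_H‖x‖² + (3/10)L_H T²‖v‖²) for all x, v ∈ ℝ^d. -/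
open MeasureTheory intervalIntegral

noncomputable def gridFloor (h t : ℝ) : ℝ := h * ⌊t / h⌋
noncomputable def gridCeil (h t : ℝ) : ℝ := h * ⌈t / h⌉

open Set
set_option maxHeartbeats 4000000

section Auxiliary

lemma absorb_max {f : ℝ → ℝ} {T A c : ℝ} (hT : 0 ≤ T)
    (hcont : ContinuousOn f (Icc 0 T)) (hf0 : 0 ≤ f 0)
    (hc : 0 ≤ c) (hc' : c ≤ 1/6)
    (key : ∀ t ∈ Icc 0 T, (∀ s ∈ Icc 0 T, f s ≤ f t) → f t ≤ A + c * f t) :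
    ∀ t ∈ Icc 0 T, f t ≤ (6/5) * A := by
  obtain ⟨t₀, ht₀, hmax⟩ := isCompact_Icc.exists_isMaxOn (nonempty_Icc.2 hT) hcont
  have h0 : 0 ≤ f t₀ := le_trans hf0 (hmax (left_mem_Icc.2 hT))
  have hk := key t₀ ht₀ (fun s hs => hmax hs)
  intro t ht
  have hft : f t ≤ f t₀ := hmax ht
  nlinarith [mul_le_mul_of_nonneg_right hc' h0]

lemma grad_lip {d : ℕ} (gradU : EuclideanSpace ℝ (Fin d) → EuclideanSpace ℝ (Fin d))
    (hess : EuclideanSpace ℝ (Fin d) → (EuclideanSpace ℝ (Fin d) →L[ℝ] EuclideanSpace ℝ (Fin d)))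
    (L : ℝ) (hhess : ∀ x, HasFDerivAt gradU (hess x) x) (hL : ∀ x, ‖hess x‖ ≤ L) :
    ∀ a b, ‖gradU a - gradU b‖ ≤ L * ‖a - b‖ := by
  intro a b
  exact (convex_univ).norm_image_sub_le_of_norm_hasFDerivWithin_le
    (fun y _ => (hhess y).hasFDerivWithinAt) (fun y _ => hL y) (mem_univ b) (mem_univ a)

lemma grad_zero {d : ℕ} (U : EuclideanSpace ℝ (Fin d) → ℝ)
    (gradU : EuclideanSpace ℝ (Fin d) → EuclideanSpace ℝ (Fin d))
    (hmin : ∀ x, U 0 ≤ U x)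
    (hgrad : ∀ x, HasFDerivAt U ((innerSL ℝ) (gradU x)) x) : gradU 0 = 0 := by
  have hloc : IsLocalMin U 0 := Filter.Eventually.of_forall hmin
  have h0 := hloc.hasFDerivAt_eq_zero (hgrad 0)
  have h1 := congrFun (congrArg (fun (f : EuclideanSpace ℝ (Fin d) →L[ℝ] ℝ) => (f : EuclideanSpace ℝ (Fin d) → ℝ)) h0) (gradU 0)
  have h2 : (inner ℝ (gradU 0) (gradU 0) : ℝ) = 0 := by simpa using h1
  exact inner_self_eq_zero.mp h2

-- grid lemmas
lemma gridFloor_eq {h : ℝ} (hh : 0 < h) {j : ℤ} {s : ℝ}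
    (h1 : j * h ≤ s) (h2 : s < (j + 1) * h) : gridFloor h s = j * h := by
  have : ⌊s / h⌋ = j := by
    rw [Int.floor_eq_iff]
    constructor
    · rw [le_div_iff₀ hh]; linarith
    · rw [div_lt_iff₀ hh]; push_cast; linarith
  unfold gridFloor; rw [this]; ring

lemma gridCeil_eq {h : ℝ} (hh : 0 < h) {j : ℤ} {s : ℝ}
    (h1 : j * h < s) (h2 : s ≤ (j + 1) * h) : gridCeil h s = (j + 1) * h := by
  have : ⌈s / h⌉ = j + 1 := by
    rw [Int.ceil_eq_iff]
    constructor
    · push_cast; rw [lt_div_iff₀ hh]; push_cast; linarith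
    · rw [div_le_iff₀ hh]; push_cast; linarith
  unfold gridCeil; rw [this]; push_cast; ring

lemma gridFloor_le {h : ℝ} (hh : 0 < h) (s : ℝ) : gridFloor h s ≤ s := by
  have := Int.floor_le (s / h)
  unfold gridFloor
  calc h * ⌊s / h⌋ ≤ h * (s / h) := by nlinarith
    _ = s := by field_simp

lemma gridFloor_nonneg {h : ℝ} (hh : 0 < h) {s : ℝ} (hs : 0 ≤ s) : 0 ≤ gridFloor h s := by
  have : (0 : ℤ) ≤ ⌊s / h⌋ := Int.floor_nonneg.2 (div_nonneg hs hh.le)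
  unfold gridFloor; positivity

lemma lt_gridFloor_add {h : ℝ} (hh : 0 < h) (s : ℝ) : s < gridFloor h s + h := by
  have := Int.lt_floor_add_one (s / h)
  unfold gridFloor
  have h2 := mul_lt_mul_of_pos_left this hh
  rw [mul_add, mul_one] at h2
  calc s = h * (s / h) := by field_simp
    _ < h * ⌊s / h⌋ + h := h2

lemma gridCeil_le {h : ℝ} (hh : 0 < h) {s : ℝ} {N : ℕ} (hs : s ≤ N * h) :
    gridCeil h s ≤ N * h := by
  have : ⌈s / h⌉ ≤ (N : ℤ) := Int.ceil_le.2 (by rw [div_le_iff₀ hh] at *; push_cast; linarith)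
  unfold gridCeil
  calc h * ⌈s / h⌉ ≤ h * (N : ℤ) := by
        have := (mul_le_mul_of_nonneg_left (by exact_mod_cast this : ((⌈s / h⌉ : ℝ)) ≤ (N:ℝ)) hh.le)
        exact this
    _ = N * h := by push_cast; ring

lemma le_gridCeil (h s : ℝ) (hh : 0 < h) : s ≤ gridCeil h s := by
  have := Int.le_ceil (s / h)
  unfold gridCeil
  calc s = h * (s / h) := by field_simp
    _ ≤ h * ⌈s / h⌉ := by nlinarith

lemma gridFloor_toNat {h : ℝ} (hh : 0 < h) {s : ℝ} (hs : 0 ≤ s) :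
    gridFloor h s = (⌊s / h⌋.toNat : ℝ) * h := by
  have : (0 : ℤ) ≤ ⌊s / h⌋ := Int.floor_nonneg.2 (div_nonneg hs hh.le)
  unfold gridFloor
  rw [show ((⌊s / h⌋.toNat : ℝ)) = ((⌊s / h⌋ : ℝ)) by exact_mod_cast congrArg Int.cast (Int.toNat_of_nonneg this)]
  ring

-- integrability of a function agreeing with a continuous one on Ico
lemma intervalIntegrable_of_eq_Ico {E : Type*} [NormedAddCommGroup E]
    {f aff : ℝ → E} {a b : ℝ} (hab : a ≤ b)
    (haff : ContinuousOn aff (Icc a b)) (heq : ∀ s ∈ Ioo a b, f s = aff s) :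
    IntervalIntegrable f volume a b := by
  have hint : IntervalIntegrable aff volume a b :=
    (uIcc_of_le hab ▸ haff).intervalIntegrable
  refine hint.congr_ae ?_
  have hb : ∀ᵐ s ∂volume.restrict (uIoc a b), s ≠ b :=
    ae_restrict_of_ae (by
      rw [ae_iff]
      have : {s : ℝ | ¬ s ≠ b} = {b} := by ext s; simp
      rw [this]; exact measure_singleton b)
  filter_upwards [ae_restrict_mem measurableSet_uIoc, hb] with s hs hsb
  rw [uIoc_of_le hab] at hs
  exact (heq s ⟨hs.1, lt_of_le_of_ne hs.2 hsb⟩).symm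

-- same-values integral congruence on a piece
lemma integral_eq_of_eq_Ico {E : Type*} [NormedAddCommGroup E] [NormedSpace ℝ E]
    {f g : ℝ → E} {a b : ℝ} (hab : a ≤ b) (heq : ∀ s ∈ Ioo a b, f s = g s) :
    (∫ s in a..b, f s) = ∫ s in a..b, g s := by
  refine intervalIntegral.integral_congr_ae ?_
  have hb : ∀ᵐ s ∂volume, s ≠ b := by
    rw [ae_iff]
    have : {s : ℝ | ¬ s ≠ b} = {b} := by ext s; simp
    rw [this]; exact measure_singleton b
  filter_upwards [hb] with s hsb hs
  rw [uIoc_of_le hab] at hs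
  exact heq s ⟨hs.1, lt_of_le_of_ne hs.2 hsb⟩


lemma trapezoid_err {E : Type*} [NormedAddCommGroup E] [NormedSpace ℝ E] [CompleteSpace E]
    (g g' : ℝ → E) (a b K : ℝ) (hab : a ≤ b) (hK : 0 ≤ K)
    (hg : ∀ t ∈ Icc a b, HasDerivWithinAt g (g' t) (Icc a b) t)
    (hLip : ∀ s ∈ Icc a b, ∀ t ∈ Icc a b, ‖g' s - g' t‖ ≤ K * |s - t|) :
    ‖(∫ s in a..b, g s) - ((b - a)/2) • (g a + g b)‖ ≤ K * (b - a)^3 / 12 := by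
  have hgc : ContinuousOn g (Icc a b) := fun t ht => (hg t ht).continuousWithinAt
  have hg'c : ContinuousOn g' (Icc a b) := by
    refine (LipschitzOnWith.of_dist_le_mul (K := K.toNNReal) (f := g') (s := Icc a b)
      ?_).continuousOn
    intro s hs t ht
    rw [dist_eq_norm, Real.coe_toNNReal K hK, dist_eq_norm]
    simpa [Real.norm_eq_abs] using hLip s hs t ht
  have huIcc : uIcc a b = Icc a b := uIcc_of_le hab
  have hgint : IntervalIntegrable g volume a b := by
    apply ContinuousOn.intervalIntegrable; rwa [huIcc]
  have hg'int : IntervalIntegrable g' volume a b := by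
    apply ContinuousOn.intervalIntegrable; rwa [huIcc]
  -- interior derivative as HasDerivAt
  have hgder : ∀ t ∈ Ioo a b, HasDerivAt g (g' t) t := fun t ht =>
    (hg t (Ioo_subset_Icc_self ht)).hasDerivAt (Icc_mem_nhds ht.1 ht.2)
  -- inner FTC
  have key1 : ∀ t ∈ Icc a b, (∫ s in a..t, g' s) = g t - g a := by
    intro t ht
    refine integral_eq_sub_of_hasDeriv_right_of_le ht.1
      (hgc.mono (Icc_subset_Icc le_rfl ht.2)) (fun s hs => ?_)
      (hg'int.mono_set (by rw [huIcc, uIcc_of_le ht.1]; exact Icc_subset_Icc le_rfl ht.2))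
    exact (hgder s ⟨hs.1, lt_of_lt_of_le hs.2 ht.2⟩).hasDerivWithinAt
  have key2 : ∀ t ∈ Icc a b, ‖(g t - g a) - (t - a) • g' t‖ ≤ K * (t - a)^2 / 2 := by
    intro t ht
    have hint : IntervalIntegrable g' volume a t :=
      hg'int.mono_set (by rw [huIcc, uIcc_of_le ht.1]; exact Icc_subset_Icc le_rfl ht.2)
    have h1 : (∫ s in a..t, (g' s - g' t)) = (g t - g a) - (t - a) • g' t := by
      rw [intervalIntegral.integral_sub hint (intervalIntegrable_const),
        key1 t ht, intervalIntegral.integral_const]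
    rw [← h1]
    have hval : (∫ s in a..t, K * (t - s)) = K * (t - a)^2 / 2 := by
      rw [intervalIntegral.integral_const_mul, intervalIntegral.integral_sub
        intervalIntegrable_const intervalIntegrable_id,
        intervalIntegral.integral_const, integral_id]
      simp only [smul_eq_mul]
      ring
    have hb : ‖∫ s in a..t, (g' s - g' t)‖ ≤ |∫ s in a..t, K * (t - s)| := by
      refine intervalIntegral.norm_integral_le_abs_of_norm_le ?_ ?_
      · filter_upwards [ae_restrict_mem measurableSet_uIoc] with s hs
        rw [uIoc_of_le ht.1] at hs
        have := hLip s ⟨le_of_lt hs.1, le_trans hs.2 ht.2⟩ t ht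
        rwa [abs_of_nonpos (by linarith [hs.2]), neg_sub] at this
      · have : ContinuousOn (fun s => K * (t - s)) (uIcc a t) :=
          continuousOn_const.mul (continuousOn_const.sub (fun u hu => continuousWithinAt_id))
        exact this.intervalIntegrable
    rw [hval, abs_of_nonneg (by nlinarith [sq_nonneg (t - a)])] at hb
    exact hb
  -- the function F
  set F : ℝ → E := fun t => (∫ s in a..t, g s) - ((t - a)/2) • (g a + g t) with hF
  set F' : ℝ → E := fun t => (1/2 : ℝ) • ((g t - g a) - (t - a) • g' t) with hF'
  have Fcont : ContinuousOn F (Icc a b) := by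
    apply ContinuousOn.sub
    · have := intervalIntegral.continuousOn_primitive_interval' (a := a) hgint
        (by rw [huIcc]; exact ⟨le_rfl, hab⟩)
      rwa [huIcc] at this
    · exact (ContinuousOn.div_const (continuousOn_id.sub continuousOn_const) 2).smul
        (continuousOn_const.add hgc)
  have Fderiv : ∀ t ∈ Ioo a b, HasDerivAt F (F' t) t := by
    intro t ht
    have htm : Icc a b ∈ nhds t := Icc_mem_nhds ht.1 ht.2
    have h1 : HasDerivAt (fun u => ∫ s in a..u, g s) (g t) t := by
      refine intervalIntegral.integral_hasDerivAt_right
        (hgint.mono_set (by rw [huIcc, uIcc_of_le ht.1.le]; exact Icc_subset_Icc le_rfl ht.2.le))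
        ⟨Icc a b, htm, hgc.aestronglyMeasurable measurableSet_Icc⟩
        (hgc.continuousAt htm)
    have h2 : HasDerivAt (fun u => ((u - a)/2) • (g a + g u))
        (((1:ℝ)/2) • (g a + g t) + ((t - a)/2) • g' t) t := by
      have hc : HasDerivAt (fun u : ℝ => (u - a)/2) (1/2) t := by
        simpa using ((hasDerivAt_id t).sub_const a).div_const 2
      have hv : HasDerivAt (fun u => g a + g u) (g' t) t :=
        (hgder t ht).const_add (g a)
      exact (hc.smul hv).congr_deriv (by module)
    exact (h1.sub h2).congr_deriv (by rw [hF']; module)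
  have F'cont : ContinuousOn F' (Icc a b) := by
    apply ContinuousOn.smul continuousOn_const
    exact (hgc.sub continuousOn_const).sub
      ((continuousOn_id.sub continuousOn_const).smul hg'c)
  have F'int : IntervalIntegrable F' volume a b :=
    (huIcc ▸ F'cont).intervalIntegrable
  have hFTC : (∫ t in a..b, F' t) = F b - F a :=
    integral_eq_sub_of_hasDeriv_right_of_le hab Fcont
      (fun t ht => (Fderiv t ht).hasDerivWithinAt) F'int
  have hFa : F a = 0 := by simp [hF]
  have hbnd : ‖∫ t in a..b, F' t‖ ≤ |∫ t in a..b, K * (t - a)^2 / 4| := by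
    refine intervalIntegral.norm_integral_le_abs_of_norm_le ?_ ?_
    · filter_upwards [ae_restrict_mem measurableSet_uIoc] with t htm
      rw [uIoc_of_le hab] at htm
      have ht : t ∈ Icc a b := ⟨htm.1.le, htm.2⟩
      have := key2 t ht
      calc ‖F' t‖ = (1/2 : ℝ) * ‖(g t - g a) - (t - a) • g' t‖ := by
            rw [hF']; rw [norm_smul]; simp
        _ ≤ (1/2) * (K * (t - a)^2 / 2) := by linarith [norm_nonneg ((g t - g a) - (t - a) • g' t)]
        _ = K * (t - a)^2 / 4 := by ring
    · exact ((continuousOn_const.mul ((continuousOn_id.sub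
        continuousOn_const).pow 2)).div_const 4).intervalIntegrable
  have hval : (∫ t in a..b, K * (t - a)^2 / 4) = K * (b - a)^3 / 12 := by
    have : (fun t => K * (t - a)^2 / 4) = fun t => (K/4) * (t - a)^2 := by ext t; ring
    rw [this, intervalIntegral.integral_const_mul]
    have h2 : (∫ t in a..b, (t - a)^2) = ((b - a)^3)/3 := by
      have := intervalIntegral.integral_comp_sub_right (a := a) (b := b) (fun u => u^2) a
      rw [this]
      simp [integral_pow]
      ring
    rw [h2]; ring
  have : ‖F b‖ ≤ K * (b - a)^3 / 12 := by
    rw [show F b = F b - F a by rw [hFa, sub_zero], ← hFTC]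
    refine le_trans hbnd ?_
    rw [hval, abs_of_nonneg (by nlinarith [pow_nonneg (sub_nonneg.2 hab) 3])]
  simpa [hF] using this

lemma flow_bootstrap {d : ℕ}
    (gradU : EuclideanSpace ℝ (Fin d) → EuclideanSpace ℝ (Fin d))
    (hgradcont : Continuous gradU)
    (L T : ℝ) (hL0 : 0 ≤ L) (hT : 0 < T) (hLT2 : L * T^2 ≤ 1/6)
    (hgn : ∀ y, ‖gradU y‖ ≤ L * ‖y‖)
    (x v : EuclideanSpace ℝ (Fin d)) (Qf Vf : ℝ → EuclideanSpace ℝ (Fin d))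
    (hQ' : ∀ t, Qf t = x + ∫ s in (0:ℝ)..t, Vf s)
    (hVel' : ∀ t, Vf t = v - ∫ s in (0:ℝ)..t, gradU (Qf s)) :
    IntervalIntegrable (fun s => gradU (Qf s)) volume 0 T ∧
    IntervalIntegrable Vf volume 0 T ∧
    ContinuousOn Qf (Icc 0 T) ∧
    (∀ t ∈ Icc (0:ℝ) T, ‖Qf t‖ ≤ (6/5)*(‖x‖ + T*‖v‖)) := by
  set gQ : ℝ → EuclideanSpace ℝ (Fin d) := fun s => gradU (Qf s) with hgQ
  have main : ∀ t, 0 ≤ t → t ≤ T → IntervalIntegrable gQ volume 0 t →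
      (IntervalIntegrable Vf volume 0 t ∧ ContinuousOn Qf (Icc 0 t) ∧
       ∀ r ∈ Icc (0:ℝ) t, ‖Qf r‖ ≤ (6/5)*(‖x‖ + T*‖v‖)) := by
    intro t h0 htT hint
    have hVcont : ContinuousOn Vf (Icc 0 t) := by
      have hprim : ContinuousOn (fun r => ∫ s in (0:ℝ)..r, gQ s) (Icc 0 t) := by
        have := intervalIntegral.continuousOn_primitive_interval' (a := 0) hint
          (by rw [uIcc_of_le h0]; exact ⟨le_rfl, h0⟩)
        rwa [uIcc_of_le h0] at this
      exact (continuousOn_const.sub hprim).congr (fun r _ => hVel' r)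
    have hVint : IntervalIntegrable Vf volume 0 t :=
      ((uIcc_of_le h0).symm ▸ hVcont).intervalIntegrable
    have hQcont : ContinuousOn Qf (Icc 0 t) := by
      have hprim : ContinuousOn (fun r => ∫ s in (0:ℝ)..r, Vf s) (Icc 0 t) := by
        have := intervalIntegral.continuousOn_primitive_interval' (a := 0) hVint
          (by rw [uIcc_of_le h0]; exact ⟨le_rfl, h0⟩)
        rwa [uIcc_of_le h0] at this
      exact (continuousOn_const.add hprim).congr (fun r _ => hQ' r)
    have hbnd : ∀ r ∈ Icc (0:ℝ) t, ‖Qf r‖ ≤ (6/5)*(‖x‖ + T*‖v‖) := by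
      refine absorb_max h0 hQcont.norm (norm_nonneg _) (by positivity) hLT2 ?_
      intro r hr hmax
      have hC0 : 0 ≤ ‖Qf r‖ := norm_nonneg _
      have hVb : ∀ s ∈ Icc (0:ℝ) r, ‖Vf s‖ ≤ ‖v‖ + (L*‖Qf r‖)*T := by
        intro s hs
        have hb1 : ‖∫ u in (0:ℝ)..s, gQ u‖ ≤ (L*‖Qf r‖) * |s - 0| := by
          apply intervalIntegral.norm_integral_le_of_norm_le_const
          intro u hu
          rw [uIoc_of_le hs.1] at hu
          exact le_trans (hgn _)
            (mul_le_mul_of_nonneg_left (hmax u ⟨hu.1.le, le_trans hu.2 (le_trans hs.2 hr.2)⟩) hL0)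
        rw [sub_zero, abs_of_nonneg hs.1] at hb1
        have hsT : s ≤ T := le_trans hs.2 (le_trans hr.2 htT)
        calc ‖Vf s‖ = ‖v - ∫ u in (0:ℝ)..s, gQ u‖ := by rw [hVel' s]
          _ ≤ ‖v‖ + ‖∫ u in (0:ℝ)..s, gQ u‖ := norm_sub_le _ _
          _ ≤ ‖v‖ + (L*‖Qf r‖)*T := by nlinarith [mul_nonneg hL0 hC0, hs.1]
      have hb2 : ‖∫ s in (0:ℝ)..r, Vf s‖ ≤ (‖v‖ + (L*‖Qf r‖)*T) * |r - 0| := by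
        apply intervalIntegral.norm_integral_le_of_norm_le_const
        intro s hs; rw [uIoc_of_le hr.1] at hs
        exact hVb s ⟨hs.1.le, hs.2⟩
      rw [sub_zero, abs_of_nonneg hr.1] at hb2
      have hrT : r ≤ T := le_trans hr.2 htT
      calc ‖Qf r‖ = ‖x + ∫ s in (0:ℝ)..r, Vf s‖ := by rw [hQ' r]
        _ ≤ ‖x‖ + ‖∫ s in (0:ℝ)..r, Vf s‖ := norm_add_le _ _
        _ ≤ ‖x‖ + (‖v‖ + (L*‖Qf r‖)*T)*r := by nlinarith
        _ ≤ (‖x‖ + T*‖v‖) + (L*T^2) * ‖Qf r‖ := by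
            nlinarith [norm_nonneg v, mul_nonneg hL0 hC0, hr.1,
              mul_le_mul_of_nonneg_left hrT (mul_nonneg (mul_nonneg hL0 hC0) hT.le),
              mul_le_mul_of_nonneg_left hrT (norm_nonneg v)]
    exact ⟨hVint, hQcont, hbnd⟩
  by_cases hTint : IntervalIntegrable gQ volume 0 T
  · obtain ⟨hVint, hQcont, hbnd⟩ := main T hT.le le_rfl hTint
    exact ⟨hTint, hVint, hQcont, hbnd⟩
  · exfalso
    set I := {t : ℝ | t ∈ Icc (0:ℝ) T ∧ IntervalIntegrable gQ volume 0 t} with hI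
    have h0I : (0:ℝ) ∈ I := ⟨⟨le_rfl, hT.le⟩, by simp⟩
    have hbdd : BddAbove I := ⟨T, fun r hr => hr.1.2⟩
    set a := sSup I with ha
    have h0a : 0 ≤ a := le_csSup hbdd h0I
    have haT : a ≤ T := csSup_le ⟨0, h0I⟩ (fun r hr => hr.1.2)
    have hIco : ∀ r ∈ Ico (0:ℝ) a, ∃ t' ∈ I, r < t' :=
      fun r hr => exists_lt_of_lt_csSup ⟨0, h0I⟩ hr.2
    have hcont_Ico : ContinuousOn gQ (Ico 0 a) := by
      intro r hr
      obtain ⟨t', ht'I, hrt'⟩ := hIco r hr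
      have h1 := main t' ht'I.1.1 ht'I.1.2 ht'I.2
      have h2 : ContinuousOn gQ (Icc 0 t') := hgradcont.comp_continuousOn h1.2.1
      refine (h2 r ⟨hr.1, hrt'.le⟩).mono_of_mem_nhdsWithin ?_
      refine mem_nhdsWithin.2 ⟨Iio t', isOpen_Iio, hrt', ?_⟩
      intro u hu; exact ⟨hu.2.1, hu.1.le⟩
    have hbIco : ∀ r ∈ Ico (0:ℝ) a, ‖gQ r‖ ≤ L * ((6/5)*(‖x‖ + T*‖v‖)) := by
      intro r hr
      obtain ⟨t', ht'I, hrt'⟩ := hIco r hr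
      have h1 := main t' ht'I.1.1 ht'I.1.2 ht'I.2
      exact le_trans (hgn _) (mul_le_mul_of_nonneg_left (h1.2.2 r ⟨hr.1, hrt'.le⟩) hL0)
    have haint : IntervalIntegrable gQ volume 0 a := by
      rw [intervalIntegrable_iff_integrableOn_Ioc_of_le h0a,
        integrableOn_Ioc_iff_integrableOn_Ioo]
      have hmeas : AEStronglyMeasurable gQ (volume.restrict (Ioo 0 a)) :=
        (hcont_Ico.mono Ioo_subset_Ico_self).aestronglyMeasurable measurableSet_Ioo
      haveI hfin : IsFiniteMeasure (volume.restrict (Ioo (0:ℝ) a)) := ⟨by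
        rw [Measure.restrict_apply_univ]; exact measure_Ioo_lt_top⟩
      refine Integrable.mono' (integrable_const (L * ((6/5)*(‖x‖ + T*‖v‖)))) hmeas ?_
      filter_upwards [ae_restrict_mem measurableSet_Ioo] with r hr
      exact hbIco r ⟨hr.1.le, hr.2⟩
    have haltT : a < T := haT.lt_of_ne (fun he => hTint (he ▸ haint))
    have hVv : ∀ r, a < r → r ≤ T → Vf r = v := by
      intro r har hrT
      have hnot : ¬ IntervalIntegrable gQ volume 0 r := by
        intro hcon
        have : r ∈ I := ⟨⟨le_trans h0a har.le, hrT⟩, hcon⟩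
        exact absurd (le_csSup hbdd this) (not_le.2 har)
      rw [hVel' r, intervalIntegral.integral_undef hnot, sub_zero]
    have hVa : IntervalIntegrable Vf volume 0 a := (main a h0a haT haint).1
    have hVaT : IntervalIntegrable Vf volume a T :=
      intervalIntegrable_of_eq_Ico haltT.le continuousOn_const
        (fun r hr => hVv r hr.1 hr.2.le)
    have hVT : IntervalIntegrable Vf volume 0 T := hVa.trans hVaT
    have hQT : ContinuousOn Qf (Icc 0 T) := by
      have hprim : ContinuousOn (fun r => ∫ s in (0:ℝ)..r, Vf s) (Icc 0 T) := by
        have := intervalIntegral.continuousOn_primitive_interval' (a := 0) hVT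
          (by rw [uIcc_of_le hT.le]; exact ⟨le_rfl, hT.le⟩)
        rwa [uIcc_of_le hT.le] at this
      exact (continuousOn_const.add hprim).congr (fun r _ => hQ' r)
    have : IntervalIntegrable gQ volume 0 T :=
      ((uIcc_of_le hT.le).symm ▸ (hgradcont.comp_continuousOn hQT)).intervalIntegrable
    exact hTint this

lemma final_arith (L LH T h X V : ℝ) (hL0 : 0 ≤ L) (hLH0 : 0 ≤ LH)
    (hX0 : 0 ≤ X) (hV0 : 0 ≤ V) (hT : 0 < T) (hh : 0 < h)
    (hLT2 : L*T^2 ≤ 1/6) :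
    (6/5)*(h^2*(L*T*(V + L*T*((6/5)*(X + T*V)))/2
      + (LH*(V + L*T*((6/5)*(X + T*V)))^2 + L*(L*((6/5)*(X + T*V))))*T^2/12))
    ≤ h^2 * ((7/45)*L*X + (1547/1800)*L*T*V + (1/120)*LH*X^2 + (3/10)*LH*T^2*V^2) := by
  set P := (6/5)*(X + T*V) with hP
  set M := V + L*T*P with hM
  have hP0 : 0 ≤ P := by positivity
  have hM0 : 0 ≤ M := by positivity
  have hLT0 : 0 ≤ L*T := by positivity
  have hM' : M ≤ (6/5)*V + (6/5)*(L*T)*X := by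
    rw [hM, hP]
    nlinarith [mul_le_mul_of_nonneg_right hLT2 hV0]
  -- term 1 : (3/5) L T M
  have ht1 : (3/5)*(L*T)*M ≤ (18/25)*(L*T)*V + (3/25)*(L*X) := by
    have h1 : (3/5)*(L*T)*M ≤ (3/5)*(L*T)*((6/5)*V + (6/5)*(L*T)*X) :=
      mul_le_mul_of_nonneg_left hM' (by positivity)
    have h2 : (18/25)*(L*T)*((L*T)*X) = (18/25)*(L*T^2)*(L*X) := by ring
    nlinarith [mul_le_mul_of_nonneg_right hLT2 (mul_nonneg hL0 hX0),
      mul_nonneg (mul_nonneg hL0 hL0) (mul_nonneg (mul_nonneg hT.le hT.le) hX0)]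
  -- term 3 : (1/10) L^2 T^2 P
  have ht3 : (1/10)*(L*(L*P))*T^2 ≤ (1/50)*(L*X) + (1/50)*(L*T)*V := by
    have h1 : (1/10)*(L*(L*P))*T^2 = (1/10)*(L*T^2)*((6/5)*(L*X + (L*T)*V)) := by
      rw [hP]; ring
    rw [h1]
    nlinarith [mul_le_mul_of_nonneg_right hLT2
      (by positivity : (0:ℝ) ≤ (6/5)*(L*X + (L*T)*V)),
      mul_nonneg hL0 hX0, mul_nonneg hLT0 hV0]
  -- term 2 : (1/10) LH T^2 M^2
  have hM2 : M^2 ≤ ((6/5)*V + (6/5)*(L*T)*X)^2 := by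
    have := pow_le_pow_left₀ hM0 hM' 2
    exact this
  have ht2 : (1/10)*LH*(T^2*M^2) ≤ (36/125)*LH*(T^2*V^2) + (1/125)*LH*X^2 := by
    have h1 : T^2*M^2 ≤ T^2*((6/5)*V + (6/5)*(L*T)*X)^2 :=
      mul_le_mul_of_nonneg_left hM2 (by positivity)
    have h2 : T^2*((6/5)*V + (6/5)*(L*T)*X)^2 ≤ (72/25)*(T^2*V^2) + (72/25)*((L*T^2)^2*X^2) := by
      nlinarith [sq_nonneg (V - L*T*X), sq_nonneg (T*V), sq_nonneg (L*T^2*X), sq_nonneg T,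
        mul_nonneg (mul_nonneg hT.le hT.le) (sq_nonneg (V - L*T*X))]
    have h3 : (L*T^2)^2 ≤ 1/36 := by nlinarith [mul_nonneg hL0 (sq_nonneg T)]
    have h4 : (L*T^2)^2*X^2 ≤ (1/36)*X^2 :=
      mul_le_mul_of_nonneg_right h3 (sq_nonneg X)
    have h5 : T^2*M^2 ≤ (72/25)*(T^2*V^2) + (2/25)*X^2 := by linarith
    have h6 := mul_le_mul_of_nonneg_left h5 (by positivity : (0:ℝ) ≤ (1/10)*LH)
    refine le_trans h6 (le_of_eq (by ring))
  have hfinal : (6/5)*(L*T*M/2 + (LH*M^2 + L*(L*P))*T^2/12)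
      ≤ (7/45)*L*X + (1547/1800)*L*T*V + (1/120)*LH*X^2 + (3/10)*LH*T^2*V^2 := by
    have e1 : (6/5)*(L*T*M/2 + (LH*M^2 + L*(L*P))*T^2/12)
        = (3/5)*(L*T)*M + (1/10)*LH*(T^2*M^2) + (1/10)*(L*(L*P))*T^2 := by ring
    rw [e1]
    nlinarith [mul_nonneg hL0 hX0, mul_nonneg hLT0 hV0,
      mul_nonneg hLH0 (sq_nonneg X), mul_nonneg hLH0 (mul_nonneg (sq_nonneg T) (sq_nonneg V))]
  calc (6/5)*(h^2*(L*T*M/2 + (LH*M^2 + L*(L*P))*T^2/12))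
      = h^2 * ((6/5)*(L*T*M/2 + (LH*M^2 + L*(L*P))*T^2/12)) := by ring
    _ ≤ h^2 * ((7/45)*L*X + (1547/1800)*L*T*V + (1/120)*LH*X^2 + (3/10)*LH*T^2*V^2) :=
      mul_le_mul_of_nonneg_left hfinal (by positivity)

end Auxiliary

/-- Strong discretization error of velocity Verlet relative to the exact
Hamiltonian flow (Lemma `verlet_error:1`). -/
theorem verlet_strong_error {d : ℕ}
    (U : EuclideanSpace ℝ (Fin d) → ℝ)
    (gradU : EuclideanSpace ℝ (Fin d) → EuclideanSpace ℝ (Fin d))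
    (hess : EuclideanSpace ℝ (Fin d) →
      (EuclideanSpace ℝ (Fin d) →L[ℝ] EuclideanSpace ℝ (Fin d)))
    (L LH T h : ℝ) (N : ℕ)
    (hmin : ∀ x, U 0 ≤ U x) (hU0 : U 0 = 0)
    (hgrad : ∀ x, HasFDerivAt U ((innerSL ℝ) (gradU x)) x)
    (hhess : ∀ x, HasFDerivAt gradU (hess x) x)
    (hL : ∀ x, ‖hess x‖ ≤ L)
    (hLH : ∀ x y, ‖hess x - hess y‖ ≤ LH * ‖x - y‖)
    (hT : 0 < T) (hh : 0 < h) (hN : 0 < N) (hTh : T = N * h)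
    (hsmall : L * (T^2 + T * h) ≤ 1/6)
    (q w : EuclideanSpace ℝ (Fin d) → EuclideanSpace ℝ (Fin d) → ℝ →
      EuclideanSpace ℝ (Fin d))
    (hq : ∀ x v t, q x v t = x + ∫ s in (0:ℝ)..t,
      (w x v (gridFloor h s) - (s - gridFloor h s) • gradU (q x v (gridFloor h s))))
    (hw : ∀ x v t, w x v t = v - (1/2 : ℝ) • ∫ s in (0:ℝ)..t,
      (gradU (q x v (gridFloor h s)) + gradU (q x v (gridCeil h s))))
    (Q Vel : EuclideanSpace ℝ (Fin d) → EuclideanSpace ℝ (Fin d) → ℝ →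
      EuclideanSpace ℝ (Fin d))
    (hQ : ∀ x v t, Q x v t = x + ∫ s in (0:ℝ)..t, Vel x v s)
    (hVel : ∀ x v t, Vel x v t = v - ∫ s in (0:ℝ)..t, gradU (Q x v s))
    (x v : EuclideanSpace ℝ (Fin d)) :
    ∀ s ∈ Set.Icc (0:ℝ) T,
      ‖Q x v s - q x v s‖ ≤ h^2 *
        ((7/45) * L * ‖x‖ + (1547/1800) * L * T * ‖v‖ +
          (1/120) * LH * ‖x‖^2 + (3/10) * LH * T^2 * ‖v‖^2) := by
  classical
  rcases Nat.eq_zero_or_pos d with hd | hd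
  · subst hd
    have hz : ∀ y : EuclideanSpace ℝ (Fin 0), y = 0 := fun y => Subsingleton.elim y 0
    intro s hs
    rw [hz (Q x v s - q x v s), hz x, hz v]
    simp
  -- main case
  have hL0 : 0 ≤ L := le_trans (norm_nonneg _) (hL 0)
  have hLH0 : 0 ≤ LH := by
    have h1 := hLH (EuclideanSpace.single (⟨0, hd⟩ : Fin d) (1:ℝ)) 0
    rw [sub_zero] at h1
    have h2 : ‖EuclideanSpace.single (⟨0, hd⟩ : Fin d) (1:ℝ)‖ = 1 := by
      rw [EuclideanSpace.norm_single]; norm_num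
    rw [h2, mul_one] at h1
    exact le_trans (norm_nonneg _) h1
  have hglip := grad_lip gradU hess L hhess hL
  have hg0 := grad_zero U gradU hmin hgrad
  have hgn : ∀ y, ‖gradU y‖ ≤ L * ‖y‖ := by
    intro y; have := hglip y 0; simpa [hg0] using this
  have hgradcont : Continuous gradU := by
    have : Differentiable ℝ gradU := fun y => (hhess y).differentiableAt
    exact this.continuous
  have hLT2 : L * T^2 ≤ 1/6 := by nlinarith
  have hc0 : 0 ≤ L * (T^2 + T*h) := by positivity
  set qf := q x v with hqf
  set wf := w x v with hwf
  set Qf := Q x v with hQf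
  set Vf := Vel x v with hVf
  set Gq : ℝ → EuclideanSpace ℝ (Fin d) :=
    fun s => wf (gridFloor h s) - (s - gridFloor h s) • gradU (qf (gridFloor h s)) with hGq
  set W' : ℝ → EuclideanSpace ℝ (Fin d) :=
    fun s => gradU (qf (gridFloor h s)) + gradU (qf (gridCeil h s)) with hW'
  set gq : ℝ → EuclideanSpace ℝ (Fin d) := fun s => gradU (qf s) with hgq
  set gQ : ℝ → EuclideanSpace ℝ (Fin d) := fun s => gradU (Qf s) with hgQ
  have hq' : ∀ t, qf t = x + ∫ s in (0:ℝ)..t, Gq s := fun t => hq x v t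
  have hw' : ∀ t, wf t = v - (1/2:ℝ) • ∫ s in (0:ℝ)..t, W' s := fun t => hw x v t
  have hQ' : ∀ t, Qf t = x + ∫ s in (0:ℝ)..t, Vf s := fun t => hQ x v t
  have hVel' : ∀ t, Vf t = v - ∫ s in (0:ℝ)..t, gQ s := fun t => hVel x v t
  -- grid facts on pieces
  have hfloor_piece : ∀ (j : ℕ) (s : ℝ), (j:ℝ)*h ≤ s → s < ((j:ℝ)+1)*h →
      gridFloor h s = (j:ℝ)*h := by
    intro j s h1 h2
    have := gridFloor_eq (j := (j:ℤ)) hh (by push_cast; linarith) (by push_cast; linarith)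
    simpa using this
  have hceil_piece : ∀ (j : ℕ) (s : ℝ), (j:ℝ)*h < s → s ≤ ((j:ℝ)+1)*h →
      gridCeil h s = ((j:ℝ)+1)*h := by
    intro j s h1 h2
    have := gridCeil_eq (j := (j:ℤ)) hh (by push_cast; linarith) (by push_cast; linarith)
    push_cast at this
    simpa using this
  -- integrability of Gq and W' on pieces
  have hGqpiece : ∀ j : ℕ, IntervalIntegrable Gq volume ((j:ℝ)*h) (((j:ℝ)+1)*h) := by
    intro j
    refine intervalIntegrable_of_eq_Ico (aff := fun s =>
      wf ((j:ℝ)*h) - (s - (j:ℝ)*h) • gradU (qf ((j:ℝ)*h))) (by nlinarith) ?_ ?_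
    · exact continuousOn_const.sub (((continuousOn_id.sub continuousOn_const)).smul
        continuousOn_const)
    · intro s hs
      rw [hGq]
      simp only
      rw [hfloor_piece j s hs.1.le hs.2]
  have hW'piece : ∀ j : ℕ, IntervalIntegrable W' volume ((j:ℝ)*h) (((j:ℝ)+1)*h) := by
    intro j
    refine intervalIntegrable_of_eq_Ico (aff := fun _ =>
      gradU (qf ((j:ℝ)*h)) + gradU (qf (((j:ℝ)+1)*h))) (by nlinarith) continuousOn_const ?_
    intro s hs
    rw [hW']
    simp only
    rw [hfloor_piece j s hs.1.le hs.2, hceil_piece j s hs.1 hs.2.le]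
  -- integrability up to any point of [0, T]
  have hGqgrid : ∀ m : ℕ, IntervalIntegrable Gq volume 0 ((m:ℝ)*h) := by
    intro m
    induction m with
    | zero => simp
    | succ k ih =>
        have h3 : ((k+1 : ℕ) : ℝ) * h = ((k:ℝ)+1)*h := by push_cast; ring
        rw [h3]
        exact ih.trans (hGqpiece k)
  have hW'grid : ∀ m : ℕ, IntervalIntegrable W' volume 0 ((m:ℝ)*h) := by
    intro m
    induction m with
    | zero => simp
    | succ k ih =>
        have h3 : ((k+1 : ℕ) : ℝ) * h = ((k:ℝ)+1)*h := by push_cast; ring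
        rw [h3]
        exact ih.trans (hW'piece k)
  have hsub : ∀ {f : ℝ → EuclideanSpace ℝ (Fin d)} {t : ℝ},
      (∀ j : ℕ, IntervalIntegrable f volume ((j:ℝ)*h) (((j:ℝ)+1)*h)) →
      (∀ m : ℕ, IntervalIntegrable f volume 0 ((m:ℝ)*h)) →
      0 ≤ t → IntervalIntegrable f volume 0 t := by
    intro f t hp hg ht
    set m := ⌊t / h⌋.toNat with hm
    have hmh : gridFloor h t = (m:ℝ)*h := gridFloor_toNat hh ht
    have h1 : (m:ℝ)*h ≤ t := by rw [← hmh]; exact gridFloor_le hh t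
    have h2 : t ≤ ((m:ℝ)+1)*h := by
      have := lt_gridFloor_add hh t; rw [hmh] at this; linarith [this]
    exact (hg m).trans ((hp m).mono_set
      (by rw [uIcc_of_le h1, uIcc_of_le (show (m:ℝ)*h ≤ ((m:ℝ)+1)*h by nlinarith)]
          exact Icc_subset_Icc le_rfl h2))
  have hGqint : ∀ t, 0 ≤ t → IntervalIntegrable Gq volume 0 t :=
    fun t ht => hsub hGqpiece hGqgrid ht
  have hW'int : ∀ t, 0 ≤ t → IntervalIntegrable W' volume 0 t :=
    fun t ht => hsub hW'piece hW'grid ht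
  -- continuity of qf on [0, T']
  have hqcont : ∀ T' : ℝ, 0 ≤ T' → ContinuousOn qf (Icc 0 T') := by
    intro T' hT'
    have hprim : ContinuousOn (fun t => ∫ s in (0:ℝ)..t, Gq s) (Icc 0 T') := by
      have := intervalIntegral.continuousOn_primitive_interval'
        (a := 0) (hGqint T' hT') (by rw [uIcc_of_le hT']; exact ⟨le_rfl, hT'⟩)
      rwa [uIcc_of_le hT'] at this
    exact (continuousOn_const.add hprim).congr (fun t _ => hq' t)
  set X := ‖x‖ with hXdef
  set V := ‖v‖ with hVdef
  have hX0 : 0 ≤ X := norm_nonneg x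
  have hV0 : 0 ≤ V := norm_nonneg v
  have hfloor_mem : ∀ s, 0 ≤ s → s ≤ T → gridFloor h s ∈ Icc (0:ℝ) T :=
    fun s h0 h1 => ⟨gridFloor_nonneg hh h0, le_trans (gridFloor_le hh s) h1⟩
  have hceil_mem : ∀ s, 0 ≤ s → s ≤ T → gridCeil h s ∈ Icc (0:ℝ) T := by
    intro s h0 h1
    refine ⟨le_trans h0 (le_gridCeil h s hh), ?_⟩
    rw [hTh]; exact gridCeil_le hh (by rw [← hTh]; exact h1)
  have hW'bnd : ∀ (C : ℝ), (∀ r ∈ Icc (0:ℝ) T, ‖qf r‖ ≤ C) →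
      ∀ s ∈ Icc (0:ℝ) T, ‖W' s‖ ≤ 2*(L*C) := by
    intro C hC s hs
    calc ‖W' s‖ ≤ ‖gradU (qf (gridFloor h s))‖ + ‖gradU (qf (gridCeil h s))‖ :=
          norm_add_le _ _
      _ ≤ L*‖qf (gridFloor h s)‖ + L*‖qf (gridCeil h s)‖ := add_le_add (hgn _) (hgn _)
      _ ≤ 2*(L*C) := by
          have h1 := hC _ (hfloor_mem s hs.1 hs.2)
          have h2 := hC _ (hceil_mem s hs.1 hs.2)
          nlinarith [norm_nonneg (qf (gridFloor h s)), norm_nonneg (qf (gridCeil h s))]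
  have hwbnd : ∀ (C : ℝ), 0 ≤ C → (∀ r ∈ Icc (0:ℝ) T, ‖qf r‖ ≤ C) →
      ∀ t ∈ Icc (0:ℝ) T, ‖wf t‖ ≤ V + L*C*t := by
    intro C hC0 hC t ht
    rw [hw' t]
    have hb : ‖∫ s in (0:ℝ)..t, W' s‖ ≤ (2*(L*C)) * |t - 0| := by
      apply intervalIntegral.norm_integral_le_of_norm_le_const
      intro r hr
      rw [uIoc_of_le ht.1] at hr
      exact hW'bnd C hC r ⟨hr.1.le, le_trans hr.2 ht.2⟩
    rw [sub_zero, abs_of_nonneg ht.1] at hb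
    calc ‖v - (1/2:ℝ) • ∫ s in (0:ℝ)..t, W' s‖
        ≤ V + ‖(1/2:ℝ) • ∫ s in (0:ℝ)..t, W' s‖ := norm_sub_le _ _
      _ = V + (1/2) * ‖∫ s in (0:ℝ)..t, W' s‖ := by
          rw [norm_smul, Real.norm_eq_abs]; norm_num
      _ ≤ V + L*C*t := by nlinarith [norm_nonneg (∫ s in (0:ℝ)..t, W' s)]
  have hGqbnd : ∀ (C : ℝ), 0 ≤ C → (∀ r ∈ Icc (0:ℝ) T, ‖qf r‖ ≤ C) →
      ∀ s ∈ Icc (0:ℝ) T, ‖Gq s‖ ≤ V + L*C*s := by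
    intro C hC0 hC s hs
    have ha0 : 0 ≤ gridFloor h s := gridFloor_nonneg hh hs.1
    have has : gridFloor h s ≤ s := gridFloor_le hh s
    calc ‖Gq s‖
        ≤ ‖wf (gridFloor h s)‖ + ‖(s - gridFloor h s) • gradU (qf (gridFloor h s))‖ :=
          norm_sub_le _ _
      _ ≤ (V + L*C*(gridFloor h s)) + (s - gridFloor h s)*(L*C) := by
          refine add_le_add (hwbnd C hC0 hC _ (hfloor_mem s hs.1 hs.2)) ?_
          rw [norm_smul, Real.norm_eq_abs, abs_of_nonneg (by linarith)]
          have h1 := hgn (qf (gridFloor h s))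
          have h2 := hC _ (hfloor_mem s hs.1 hs.2)
          have h3 : ‖gradU (qf (gridFloor h s))‖ ≤ L*C :=
            le_trans h1 (mul_le_mul_of_nonneg_left h2 hL0)
          exact mul_le_mul_of_nonneg_left h3 (by linarith)
      _ = V + L*C*s := by ring
  have hP : ∀ t ∈ Icc (0:ℝ) T, ‖qf t‖ ≤ (6/5)*(X + T*V) := by
    refine absorb_max hT.le ((hqcont T hT.le).norm) (norm_nonneg _) hc0 hsmall ?_
    intro t ht hmax
    have hC0 : 0 ≤ ‖qf t‖ := norm_nonneg _
    have hb : ‖∫ s in (0:ℝ)..t, Gq s‖ ≤ (V + L*‖qf t‖*T) * |t - 0| := by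
      apply intervalIntegral.norm_integral_le_of_norm_le_const
      intro r hr
      rw [uIoc_of_le ht.1] at hr
      have := hGqbnd ‖qf t‖ hC0 hmax r ⟨hr.1.le, le_trans hr.2 ht.2⟩
      have hrT : r ≤ T := le_trans hr.2 ht.2
      nlinarith [mul_nonneg hL0 hC0]
    rw [sub_zero, abs_of_nonneg ht.1] at hb
    calc ‖qf t‖ = ‖x + ∫ s in (0:ℝ)..t, Gq s‖ := by rw [hq' t]
      _ ≤ X + ‖∫ s in (0:ℝ)..t, Gq s‖ := norm_add_le _ _
      _ ≤ X + (V + L*‖qf t‖*T)*t := by nlinarith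
      _ ≤ (X + T*V) + (L*(T^2 + T*h))*‖qf t‖ := by
          nlinarith [mul_nonneg hL0 hC0, mul_nonneg (mul_nonneg hL0 hC0) hT.le,
            mul_le_mul_of_nonneg_left ht.2 (mul_nonneg (mul_nonneg hL0 hC0) hT.le),
            mul_nonneg (mul_nonneg (mul_nonneg hL0 hC0) hT.le) hh.le, ht.1, ht.2]
  set P := (6/5)*(X + T*V) with hPdef
  have hP0 : 0 ≤ P := by positivity
  set M := V + L*T*P with hMdef
  have hM0 : 0 ≤ M := by positivity
  have hMbnd : ∀ s ∈ Icc (0:ℝ) T, ‖Gq s‖ ≤ M := by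
    intro s hs
    refine le_trans (hGqbnd P hP0 hP s hs) ?_
    have := mul_le_mul_of_nonneg_left hs.2 (mul_nonneg hL0 hP0)
    rw [hMdef]; nlinarith
  -- polynomial formula on each piece
  have hpoly : ∀ j : ℕ, ∀ t ∈ Icc ((j:ℝ)*h) (((j:ℝ)+1)*h),
      qf t = qf ((j:ℝ)*h) + (t - (j:ℝ)*h) • wf ((j:ℝ)*h)
        - ((t - (j:ℝ)*h)^2/2) • gradU (qf ((j:ℝ)*h)) := by
    intro j t ht
    have h0j : (0:ℝ) ≤ (j:ℝ)*h := by positivity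
    have hjt : (j:ℝ)*h ≤ t := ht.1
    have h0t : 0 ≤ t := le_trans h0j hjt
    have hsplit : qf t - qf ((j:ℝ)*h) = ∫ s in ((j:ℝ)*h)..t, Gq s := by
      rw [hq' t, hq' ((j:ℝ)*h)]
      rw [add_sub_add_left_eq_sub]
      exact intervalIntegral.integral_interval_sub_left (hGqint t h0t) (hGqint _ h0j)
    have haff : (∫ s in ((j:ℝ)*h)..t, Gq s)
        = ∫ s in ((j:ℝ)*h)..t,
            (wf ((j:ℝ)*h) - (s - (j:ℝ)*h) • gradU (qf ((j:ℝ)*h))) := by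
      apply integral_eq_of_eq_Ico hjt
      intro s hs
      rw [hGq]; simp only
      rw [hfloor_piece j s hs.1.le (lt_of_lt_of_le hs.2 ht.2)]
    have hid : (∫ s in ((j:ℝ)*h)..t, (s - (j:ℝ)*h)) = (t - (j:ℝ)*h)^2/2 := by
      rw [intervalIntegral.integral_comp_sub_right (fun u => u) ((j:ℝ)*h), integral_id]
      ring
    have hcomp : (∫ s in ((j:ℝ)*h)..t,
          (wf ((j:ℝ)*h) - (s - (j:ℝ)*h) • gradU (qf ((j:ℝ)*h))))
        = (t - (j:ℝ)*h) • wf ((j:ℝ)*h)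
          - ((t - (j:ℝ)*h)^2/2) • gradU (qf ((j:ℝ)*h)) := by
      have hint2 : IntervalIntegrable (fun s : ℝ => (s - (j:ℝ)*h) • gradU (qf ((j:ℝ)*h)))
          volume ((j:ℝ)*h) t := Continuous.intervalIntegrable (by fun_prop) _ _
      rw [intervalIntegral.integral_sub intervalIntegrable_const hint2]
      rw [intervalIntegral.integral_const]
      rw [intervalIntegral.integral_smul_const]
      rw [hid]
    have hfin : qf t = qf ((j:ℝ)*h) + ((t - (j:ℝ)*h) • wf ((j:ℝ)*h)
        - ((t - (j:ℝ)*h)^2/2) • gradU (qf ((j:ℝ)*h))) := by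
      rw [← hcomp, ← haff, ← hsplit]; abel
    rw [hfin]; abel
  -- derivative of qf within each piece
  have hqderiv : ∀ j : ℕ, ∀ t ∈ Icc ((j:ℝ)*h) (((j:ℝ)+1)*h),
      HasDerivWithinAt qf (wf ((j:ℝ)*h) - (t - (j:ℝ)*h) • gradU (qf ((j:ℝ)*h)))
        (Icc ((j:ℝ)*h) (((j:ℝ)+1)*h)) t := by
    intro j t ht
    have h1 : HasDerivAt (fun u : ℝ => (u - (j:ℝ)*h)) 1 t := (hasDerivAt_id t).sub_const _
    have h2 := (h1.smul_const (wf ((j:ℝ)*h))).const_add (qf ((j:ℝ)*h))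
    have h3 : HasDerivAt (fun u : ℝ => ((u - (j:ℝ)*h)^2/2)) (t - (j:ℝ)*h) t := by
      have h3' := (((hasDerivAt_id t).sub_const ((j:ℝ)*h)).pow 2).div_const 2
      refine h3'.congr_deriv ?_
      simp only [Nat.cast_ofNat, pow_one, id_eq]
      ring
    have h4 := h2.sub (h3.smul_const (gradU (qf ((j:ℝ)*h))))
    have h5 : HasDerivAt (fun u => qf ((j:ℝ)*h) + (u - (j:ℝ)*h) • wf ((j:ℝ)*h)
        - ((u - (j:ℝ)*h)^2/2) • gradU (qf ((j:ℝ)*h)))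
        (wf ((j:ℝ)*h) - (t - (j:ℝ)*h) • gradU (qf ((j:ℝ)*h))) t :=
      h4.congr_deriv (by module)
    exact (h5.hasDerivWithinAt).congr (fun u hu => hpoly j u hu) (hpoly j t ht)
  -- velocity bound on each piece
  have hvelpiece : ∀ j : ℕ, ((j:ℝ)+1)*h ≤ T → ∀ r ∈ Icc ((j:ℝ)*h) (((j:ℝ)+1)*h),
      ‖wf ((j:ℝ)*h) - (r - (j:ℝ)*h) • gradU (qf ((j:ℝ)*h))‖ ≤ M := by
    intro j hj r hr
    have h0j : (0:ℝ) ≤ (j:ℝ)*h := by positivity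
    have hjh : (j:ℝ)*h ≤ T := le_trans (by nlinarith) hj
    have hjmem : (j:ℝ)*h ∈ Icc (0:ℝ) T := ⟨h0j, hjh⟩
    have hw1 := hwbnd P hP0 hP _ hjmem
    have hg1 : ‖gradU (qf ((j:ℝ)*h))‖ ≤ L*P :=
      le_trans (hgn _) (mul_le_mul_of_nonneg_left (hP _ hjmem) hL0)
    calc ‖wf ((j:ℝ)*h) - (r - (j:ℝ)*h) • gradU (qf ((j:ℝ)*h))‖
        ≤ ‖wf ((j:ℝ)*h)‖ + ‖(r - (j:ℝ)*h) • gradU (qf ((j:ℝ)*h))‖ := norm_sub_le _ _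
      _ ≤ (V + L*P*((j:ℝ)*h)) + (r - (j:ℝ)*h)*(L*P) := by
          refine add_le_add hw1 ?_
          rw [norm_smul, Real.norm_eq_abs, abs_of_nonneg (by linarith [hr.1])]
          exact mul_le_mul_of_nonneg_left hg1 (by linarith [hr.1])
      _ ≤ M := by
          rw [hMdef]
          have hr2 : r - (j:ℝ)*h ≤ h := by linarith [hr.2]
          nlinarith [mul_nonneg hL0 hP0, hr.1, h0j, hj]
  -- Lipschitz bound for qf on each piece
  have hqlip : ∀ j : ℕ, ((j:ℝ)+1)*h ≤ T → ∀ s' ∈ Icc ((j:ℝ)*h) (((j:ℝ)+1)*h),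
      ∀ t' ∈ Icc ((j:ℝ)*h) (((j:ℝ)+1)*h), ‖qf s' - qf t'‖ ≤ M * |s' - t'| := by
    intro j hj s' hs' t' ht'
    have := (convex_Icc ((j:ℝ)*h) (((j:ℝ)+1)*h)).norm_image_sub_le_of_norm_hasDerivWithin_le
      (f' := fun r => wf ((j:ℝ)*h) - (r - (j:ℝ)*h) • gradU (qf ((j:ℝ)*h)))
      (fun r hr => hqderiv j r hr) (fun r hr => hvelpiece j hj r hr) ht' hs'
    simpa [Real.norm_eq_abs] using this
  set K := LH*M^2 + L*(L*P) with hKdef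
  have hK0 : 0 ≤ K := by positivity
  -- trapezoid bound on each piece
  have htrap : ∀ j : ℕ, ((j:ℝ)+1)*h ≤ T →
      ‖(∫ s in ((j:ℝ)*h)..(((j:ℝ)+1)*h), gq s)
        - (h/2) • (gq ((j:ℝ)*h) + gq (((j:ℝ)+1)*h))‖ ≤ K*h^3/12 := by
    intro j hj
    have h0j : (0:ℝ) ≤ (j:ℝ)*h := by positivity
    have hab : (j:ℝ)*h ≤ ((j:ℝ)+1)*h := by nlinarith
    have hgder : ∀ t ∈ Icc ((j:ℝ)*h) (((j:ℝ)+1)*h),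
        HasDerivWithinAt gq
          (hess (qf t) (wf ((j:ℝ)*h) - (t - (j:ℝ)*h) • gradU (qf ((j:ℝ)*h))))
          (Icc ((j:ℝ)*h) (((j:ℝ)+1)*h)) t := by
      intro t ht
      exact (hhess (qf t)).comp_hasDerivWithinAt t (hqderiv j t ht)
    have hg'lip : ∀ s' ∈ Icc ((j:ℝ)*h) (((j:ℝ)+1)*h), ∀ t' ∈ Icc ((j:ℝ)*h) (((j:ℝ)+1)*h),
        ‖hess (qf s') (wf ((j:ℝ)*h) - (s' - (j:ℝ)*h) • gradU (qf ((j:ℝ)*h)))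
          - hess (qf t') (wf ((j:ℝ)*h) - (t' - (j:ℝ)*h) • gradU (qf ((j:ℝ)*h)))‖
          ≤ K * |s' - t'| := by
      intro s' hs' t' ht'
      set u1 := wf ((j:ℝ)*h) - (s' - (j:ℝ)*h) • gradU (qf ((j:ℝ)*h)) with hu1
      set u2 := wf ((j:ℝ)*h) - (t' - (j:ℝ)*h) • gradU (qf ((j:ℝ)*h)) with hu2
      have hsplit : hess (qf s') u1 - hess (qf t') u2
          = (hess (qf s') - hess (qf t')) u1 + hess (qf t') (u1 - u2) := by
        simp only [ContinuousLinearMap.sub_apply, map_sub]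
        abel
      have hu12 : u1 - u2 = (t' - s') • gradU (qf ((j:ℝ)*h)) := by
        rw [hu1, hu2]; module
      have hIccT : ((j:ℝ)*h) ∈ Icc (0:ℝ) T ∧ (((j:ℝ)+1)*h) ≤ T := ⟨⟨h0j, le_trans hab hj⟩, hj⟩
      have hg1 : ‖gradU (qf ((j:ℝ)*h))‖ ≤ L*P :=
        le_trans (hgn _) (mul_le_mul_of_nonneg_left (hP _ hIccT.1) hL0)
      have hb1 : ‖(hess (qf s') - hess (qf t')) u1‖ ≤ (LH * (M * |s' - t'|)) * M := by
        refine le_trans (ContinuousLinearMap.le_opNorm _ _) ?_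
        have hA : ‖hess (qf s') - hess (qf t')‖ ≤ LH * (M * |s' - t'|) :=
          le_trans (hLH _ _) (mul_le_mul_of_nonneg_left (hqlip j hj s' hs' t' ht') hLH0)
        have hu1b : ‖u1‖ ≤ M := hvelpiece j hj s' hs'
        exact mul_le_mul hA hu1b (norm_nonneg _) (by positivity)
      have hb2 : ‖hess (qf t') (u1 - u2)‖ ≤ L * (|s' - t'| * (L*P)) := by
        refine le_trans (ContinuousLinearMap.le_opNorm _ _) ?_
        have : ‖u1 - u2‖ ≤ |s' - t'| * (L*P) := by
          rw [hu12, norm_smul, Real.norm_eq_abs, abs_sub_comm]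
          exact mul_le_mul_of_nonneg_left hg1 (abs_nonneg _)
        exact mul_le_mul (hL _) this (norm_nonneg _) hL0
      calc ‖hess (qf s') u1 - hess (qf t') u2‖
          ≤ ‖(hess (qf s') - hess (qf t')) u1‖ + ‖hess (qf t') (u1 - u2)‖ := by
            rw [hsplit]; exact norm_add_le _ _
        _ ≤ (LH * (M * |s' - t'|)) * M + L * (|s' - t'| * (L*P)) := add_le_add hb1 hb2
        _ = K * |s' - t'| := by rw [hKdef]; ring
    have := trapezoid_err gq
      (fun t => hess (qf t) (wf ((j:ℝ)*h) - (t - (j:ℝ)*h) • gradU (qf ((j:ℝ)*h))))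
      ((j:ℝ)*h) (((j:ℝ)+1)*h) K hab hK0 hgder hg'lip
    have hba : ((j:ℝ)+1)*h - (j:ℝ)*h = h := by ring
    rw [hba] at this
    exact this
  -- trapezoid rule value of the W' integral on each piece
  have hWpiece : ∀ j : ℕ, (∫ s in ((j:ℝ)*h)..(((j:ℝ)+1)*h), W' s)
      = h • (gq ((j:ℝ)*h) + gq (((j:ℝ)+1)*h)) := by
    intro j
    have hab : (j:ℝ)*h ≤ ((j:ℝ)+1)*h := by nlinarith
    have : (∫ s in ((j:ℝ)*h)..(((j:ℝ)+1)*h), W' s)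
        = ∫ s in ((j:ℝ)*h)..(((j:ℝ)+1)*h),
            (gradU (qf ((j:ℝ)*h)) + gradU (qf (((j:ℝ)+1)*h))) := by
      apply integral_eq_of_eq_Ico hab
      intro s hs
      rw [hW']; simp only
      rw [hfloor_piece j s hs.1.le hs.2, hceil_piece j s hs.1 hs.2.le]
    rw [this, intervalIntegral.integral_const]
    rw [show ((j:ℝ)+1)*h - (j:ℝ)*h = h by ring]
  -- Q-side regularity
  obtain ⟨hgQT, hVT, hQcont, hψQ⟩ := flow_bootstrap gradU hgradcont L T hL0 hT hLT2 hgn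
    x v Qf Vf hQ' hVel'
  have hgQsub : ∀ c t : ℝ, 0 ≤ c → c ≤ t → t ≤ T → IntervalIntegrable gQ volume c t := by
    intro c t h1 h2 h3
    exact hgQT.mono_set (by rw [uIcc_of_le h2, uIcc_of_le hT.le]; exact Icc_subset_Icc h1 h3)
  have hVsub : ∀ c t : ℝ, 0 ≤ c → c ≤ t → t ≤ T → IntervalIntegrable Vf volume c t := by
    intro c t h1 h2 h3
    exact hVT.mono_set (by rw [uIcc_of_le h2, uIcc_of_le hT.le]; exact Icc_subset_Icc h1 h3)
  have hgqc : ContinuousOn gq (Icc 0 T) := hgradcont.comp_continuousOn (hqcont T hT.le)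
  have hgqsub : ∀ c t : ℝ, 0 ≤ c → c ≤ t → t ≤ T → IntervalIntegrable gq volume c t := by
    intro c t h1 h2 h3
    exact ContinuousOn.intervalIntegrable
      (by rw [uIcc_of_le h2]; exact hgqc.mono (Icc_subset_Icc h1 h3))
  -- velocity bound for the exact flow
  have hMQ : ∀ s ∈ Icc (0:ℝ) T, ‖Vf s‖ ≤ M := by
    intro s hs
    have hb1 : ‖∫ u in (0:ℝ)..s, gQ u‖ ≤ (L*P) * |s - 0| := by
      apply intervalIntegral.norm_integral_le_of_norm_le_const
      intro u hu; rw [uIoc_of_le hs.1] at hu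
      exact le_trans (hgn _)
        (mul_le_mul_of_nonneg_left (hψQ u ⟨hu.1.le, le_trans hu.2 hs.2⟩) hL0)
    rw [sub_zero, abs_of_nonneg hs.1] at hb1
    calc ‖Vf s‖ = ‖v - ∫ u in (0:ℝ)..s, gQ u‖ := by rw [hVel' s]
      _ ≤ V + ‖∫ u in (0:ℝ)..s, gQ u‖ := norm_sub_le _ _
      _ ≤ M := by
          rw [hMdef]
          nlinarith [mul_nonneg hL0 hP0, hs.2]
  -- displacement bound for the exact flow
  have hQdisp : ∀ c r : ℝ, 0 ≤ c → c ≤ r → r ≤ T → ‖Qf r - Qf c‖ ≤ M * (r - c) := by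
    intro c r h1 h2 h3
    have hsplit : Qf r - Qf c = ∫ u in c..r, Vf u := by
      rw [hQ' r, hQ' c, add_sub_add_left_eq_sub]
      exact intervalIntegral.integral_interval_sub_left
        (hVsub 0 r le_rfl (le_trans h1 h2) h3) (hVsub 0 c le_rfl h1 (le_trans h2 h3))
    have hb : ‖∫ u in c..r, Vf u‖ ≤ M * |r - c| := by
      apply intervalIntegral.norm_integral_le_of_norm_le_const
      intro u hu; rw [uIoc_of_le h2] at hu
      exact hMQ u ⟨le_trans h1 hu.1.le, le_trans hu.2 h3⟩
    rw [abs_of_nonneg (by linarith)] at hb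
    rw [hsplit]; exact hb
  -- trapezoid comparison over full grid intervals
  have hsum : ∀ m : ℕ, (m:ℝ)*h ≤ T →
      ‖(∫ s in (0:ℝ)..((m:ℝ)*h), gq s) - (1/2:ℝ) • ∫ s in (0:ℝ)..((m:ℝ)*h), W' s‖
        ≤ (m:ℝ) * (K*h^3/12) := by
    intro m hm
    have hcast : ∀ k : ℕ, ((k+1 : ℕ) : ℝ) * h = ((k:ℝ)+1)*h := by
      intro k; push_cast; ring
    have hpieceT : ∀ k : ℕ, k < m → ((k:ℝ)+1)*h ≤ T := by
      intro k hk
      have : ((k:ℝ)+1) ≤ (m:ℝ) := by exact_mod_cast hk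
      nlinarith
    have h1 : (∑ k ∈ Finset.range m, ∫ s in ((k:ℕ):ℝ)*h..((k+1:ℕ):ℝ)*h, gq s)
        = ∫ s in ((0:ℕ):ℝ)*h..((m:ℕ):ℝ)*h, gq s := by
      apply intervalIntegral.sum_integral_adjacent_intervals (a := fun k : ℕ => (k:ℝ)*h)
      intro k hk
      rw [hcast k]
      refine hgqsub _ _ (by positivity) (by nlinarith) (hpieceT k hk)
    have h2 : (∑ k ∈ Finset.range m, ∫ s in ((k:ℕ):ℝ)*h..((k+1:ℕ):ℝ)*h, W' s)
        = ∫ s in ((0:ℕ):ℝ)*h..((m:ℕ):ℝ)*h, W' s := by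
      apply intervalIntegral.sum_integral_adjacent_intervals (a := fun k : ℕ => (k:ℝ)*h)
      intro k hk
      rw [hcast k]
      exact hW'piece k
    have h3 : (∫ s in (0:ℝ)..((m:ℝ)*h), gq s) - (1/2:ℝ) • ∫ s in (0:ℝ)..((m:ℝ)*h), W' s
        = ∑ k ∈ Finset.range m, ((∫ s in ((k:ℕ):ℝ)*h..((k+1:ℕ):ℝ)*h, gq s)
            - (1/2:ℝ) • ∫ s in ((k:ℕ):ℝ)*h..((k+1:ℕ):ℝ)*h, W' s) := by
      rw [Finset.sum_sub_distrib, h1, ← Finset.smul_sum, h2]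
      norm_num
    rw [h3]
    refine le_trans (norm_sum_le _ _) ?_
    have h4 : ∀ k ∈ Finset.range m,
        ‖(∫ s in ((k:ℕ):ℝ)*h..((k+1:ℕ):ℝ)*h, gq s)
          - (1/2:ℝ) • ∫ s in ((k:ℕ):ℝ)*h..((k+1:ℕ):ℝ)*h, W' s‖ ≤ K*h^3/12 := by
      intro k hk
      rw [hcast k, hWpiece k, smul_smul]
      have := htrap k (hpieceT k (Finset.mem_range.mp hk))
      rw [show (1/2:ℝ) * h = h/2 by ring]
      exact this
    refine le_trans (Finset.sum_le_sum h4) ?_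
    rw [Finset.sum_const, Finset.card_range, nsmul_eq_mul]
  -- final absorption
  have hecont : ContinuousOn (fun t => ‖Qf t - qf t‖) (Icc 0 T) :=
    (hQcont.sub (hqcont T hT.le)).norm
  have hEbound : ∀ t ∈ Icc (0:ℝ) T,
      ‖Qf t - qf t‖ ≤ (6/5)*(h^2*(L*T*M/2 + K*T^2/12)) := by
    refine absorb_max hT.le hecont (norm_nonneg _) hc0 hsmall ?_
    intro t ht hmax
    have hE0 : 0 ≤ ‖Qf t - qf t‖ := norm_nonneg _
    have hDb : ∀ s ∈ uIoc (0:ℝ) t, ‖Vf s - Gq s‖ ≤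
        (L*M*h^2/2 + K*T*h^2/12) + (L*(T + h))*‖Qf t - qf t‖ := by
      intro s hs
      rw [uIoc_of_le ht.1] at hs
      have hsT : s ≤ T := le_trans hs.2 ht.2
      have hs0 : 0 ≤ s := hs.1.le
      set a := gridFloor h s with hadef
      have ha0 : 0 ≤ a := gridFloor_nonneg hh hs0
      have has : a ≤ s := gridFloor_le hh s
      have haT : a ≤ T := le_trans has hsT
      have hsah : s - a ≤ h := by
        have := lt_gridFloor_add hh s; rw [← hadef] at this; linarith
      have heq : Vf s - Gq s =
          -(∫ r in (0:ℝ)..a, (gQ r - gq r))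
          - ((∫ r in (0:ℝ)..a, gq r) - (1/2:ℝ) • ∫ r in (0:ℝ)..a, W' r)
          - (∫ r in a..s, (gQ r - gQ a))
          - (s - a) • (gQ a - gq a) := by
        have e0 : Vf s = v - ∫ r in (0:ℝ)..s, gQ r := hVel' s
        have e1 : Gq s = (v - (1/2:ℝ) • ∫ r in (0:ℝ)..a, W' r) - (s - a) • gq a := by
          rw [hGq]; simp only [← hadef]
          rw [hw' a]
        have e2 : (∫ r in (0:ℝ)..s, gQ r) = (∫ r in (0:ℝ)..a, gQ r) + ∫ r in a..s, gQ r :=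
          (intervalIntegral.integral_add_adjacent_intervals
            (hgQsub 0 a le_rfl ha0 haT) (hgQsub a s ha0 has hsT)).symm
        have e3 : (∫ r in (0:ℝ)..a, (gQ r - gq r))
            = (∫ r in (0:ℝ)..a, gQ r) - ∫ r in (0:ℝ)..a, gq r :=
          intervalIntegral.integral_sub (hgQsub 0 a le_rfl ha0 haT)
            (hgqsub 0 a le_rfl ha0 haT)
        have e4 : (∫ r in a..s, (gQ r - gQ a))
            = (∫ r in a..s, gQ r) - (s - a) • gQ a := by
          rw [intervalIntegral.integral_sub (hgQsub a s ha0 has hsT)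
            intervalIntegrable_const, intervalIntegral.integral_const]
        rw [e0, e1, e2, e3, e4]
        module
      have hb1 : ‖∫ r in (0:ℝ)..a, (gQ r - gq r)‖ ≤ (L*‖Qf t - qf t‖) * T := by
        have hb : ‖∫ r in (0:ℝ)..a, (gQ r - gq r)‖ ≤ (L*‖Qf t - qf t‖) * |a - 0| := by
          apply intervalIntegral.norm_integral_le_of_norm_le_const
          intro u hu; rw [uIoc_of_le ha0] at hu
          exact le_trans (hglip _ _)
            (mul_le_mul_of_nonneg_left (hmax u ⟨hu.1.le, le_trans hu.2 haT⟩) hL0)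
        rw [sub_zero, abs_of_nonneg ha0] at hb
        exact le_trans hb (mul_le_mul_of_nonneg_left haT (by positivity))
      have hb2 : ‖(∫ r in (0:ℝ)..a, gq r) - (1/2:ℝ) • ∫ r in (0:ℝ)..a, W' r‖
          ≤ K*T*h^2/12 := by
        have ham : a = ((⌊s / h⌋.toNat : ℕ):ℝ)*h := gridFloor_toNat hh hs0
        have hmT : ((⌊s / h⌋.toNat : ℕ):ℝ)*h ≤ T := by rw [← ham]; exact haT
        have := hsum ⌊s / h⌋.toNat hmT
        rw [← ham] at this
        refine le_trans this ?_
        have hKh : 0 ≤ K*h^2/12 := by positivity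
        calc ((⌊s / h⌋.toNat : ℕ):ℝ) * (K*h^3/12)
            = (((⌊s / h⌋.toNat : ℕ):ℝ)*h) * (K*h^2/12) := by ring
          _ ≤ T * (K*h^2/12) := mul_le_mul_of_nonneg_right hmT hKh
          _ = K*T*h^2/12 := by ring
      have hb3 : ‖∫ r in a..s, (gQ r - gQ a)‖ ≤ L*M*h^2/2 := by
        have hval : (∫ r in a..s, (L*M)*(r - a)) = (L*M)*((s-a)^2/2) := by
          rw [intervalIntegral.integral_const_mul,
            intervalIntegral.integral_comp_sub_right (fun u => u) a, integral_id]
          ring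
        have hb : ‖∫ r in a..s, (gQ r - gQ a)‖ ≤ |∫ r in a..s, (L*M)*(r - a)| := by
          refine intervalIntegral.norm_integral_le_abs_of_norm_le ?_ ?_
          · filter_upwards [ae_restrict_mem measurableSet_uIoc] with r hr
            rw [uIoc_of_le has] at hr
            refine le_trans (hglip _ _) ?_
            have hd := hQdisp a r ha0 hr.1.le (le_trans hr.2 hsT)
            calc L * ‖Qf r - Qf a‖ ≤ L * (M * (r - a)) :=
                  mul_le_mul_of_nonneg_left hd hL0
              _ = (L*M)*(r - a) := by ring
          · exact Continuous.intervalIntegrable (by fun_prop) _ _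
        rw [hval, abs_of_nonneg (by positivity)] at hb
        refine le_trans hb ?_
        have h1 : (s-a)^2 ≤ h^2 := by nlinarith
        have h2 := mul_le_mul_of_nonneg_left h1 (mul_nonneg hL0 hM0)
        ring_nf at h2 ⊢
        linarith
      have hb4 : ‖(s - a) • (gQ a - gq a)‖ ≤ (L*‖Qf t - qf t‖) * h := by
        rw [norm_smul, Real.norm_eq_abs, abs_of_nonneg (by linarith)]
        have h1 : ‖gQ a - gq a‖ ≤ L*‖Qf t - qf t‖ :=
          le_trans (hglip _ _) (mul_le_mul_of_nonneg_left (hmax a ⟨ha0, haT⟩) hL0)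
        calc (s - a) * ‖gQ a - gq a‖ ≤ h * (L*‖Qf t - qf t‖) :=
              mul_le_mul hsah h1 (norm_nonneg _) hh.le
          _ = (L*‖Qf t - qf t‖) * h := by ring
      rw [heq]
      calc ‖-(∫ r in (0:ℝ)..a, (gQ r - gq r))
          - ((∫ r in (0:ℝ)..a, gq r) - (1/2:ℝ) • ∫ r in (0:ℝ)..a, W' r)
          - (∫ r in a..s, (gQ r - gQ a))
          - (s - a) • (gQ a - gq a)‖
          ≤ ‖-(∫ r in (0:ℝ)..a, (gQ r - gq r))
            - ((∫ r in (0:ℝ)..a, gq r) - (1/2:ℝ) • ∫ r in (0:ℝ)..a, W' r)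
            - (∫ r in a..s, (gQ r - gQ a))‖ + ‖(s - a) • (gQ a - gq a)‖ :=
            norm_sub_le _ _
        _ ≤ (‖-(∫ r in (0:ℝ)..a, (gQ r - gq r))
            - ((∫ r in (0:ℝ)..a, gq r) - (1/2:ℝ) • ∫ r in (0:ℝ)..a, W' r)‖
            + ‖∫ r in a..s, (gQ r - gQ a)‖) + ‖(s - a) • (gQ a - gq a)‖ := by
            have := norm_sub_le (-(∫ r in (0:ℝ)..a, (gQ r - gq r))
              - ((∫ r in (0:ℝ)..a, gq r) - (1/2:ℝ) • ∫ r in (0:ℝ)..a, W' r))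
              (∫ r in a..s, (gQ r - gQ a))
            linarith
        _ ≤ ((‖∫ r in (0:ℝ)..a, (gQ r - gq r)‖
            + ‖(∫ r in (0:ℝ)..a, gq r) - (1/2:ℝ) • ∫ r in (0:ℝ)..a, W' r‖)
            + ‖∫ r in a..s, (gQ r - gQ a)‖) + ‖(s - a) • (gQ a - gq a)‖ := by
            have h5 := norm_sub_le (-(∫ r in (0:ℝ)..a, (gQ r - gq r)))
              ((∫ r in (0:ℝ)..a, gq r) - (1/2:ℝ) • ∫ r in (0:ℝ)..a, W' r)
            rw [norm_neg] at h5
            linarith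
        _ ≤ (L*M*h^2/2 + K*T*h^2/12) + (L*(T + h))*‖Qf t - qf t‖ := by
            nlinarith [hb1, hb2, hb3, hb4]
    have hsplit : Qf t - qf t = ∫ s in (0:ℝ)..t, (Vf s - Gq s) := by
      rw [hQ' t, hq' t, add_sub_add_left_eq_sub,
        ← intervalIntegral.integral_sub (hVsub 0 t le_rfl ht.1 ht.2) (hGqint t ht.1)]
    have hb : ‖Qf t - qf t‖ ≤
        ((L*M*h^2/2 + K*T*h^2/12) + (L*(T + h))*‖Qf t - qf t‖) * |t - 0| := by
      calc ‖Qf t - qf t‖ = ‖∫ s in (0:ℝ)..t, (Vf s - Gq s)‖ := by rw [← hsplit]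
        _ ≤ _ := intervalIntegral.norm_integral_le_of_norm_le_const hDb
    rw [sub_zero, abs_of_nonneg ht.1] at hb
    have hC1 : 0 ≤ L*M*h^2/2 + K*T*h^2/12 := by positivity
    have hc1 : 0 ≤ (L*(T + h))*‖Qf t - qf t‖ := by positivity
    have h6 := mul_le_mul_of_nonneg_left ht.2 (add_nonneg hC1 hc1)
    nlinarith [hb, h6, mul_le_mul_of_nonneg_left ht.2 hC1,
      mul_le_mul_of_nonneg_left ht.2 hc1]
  -- conclusion
  intro s hs
  refine le_trans (hEbound s hs) ?_
  rw [hKdef, hMdef, hPdef]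
  exact final_arith L LH T h X V hL0 hLH0 hX0 hV0 hT hh hLT2
end

section
/- Suppose U ∈ C²(ℝ^d) with ‖D²U‖ ≤ L, L T² ≤ 1/6, and let (q_s, v_s) be the exact Hamiltonian flow started at (x, v) with U having a global minimum at 0 and U(0) = 0. Then max_{s ≤ T} ‖q_s‖ ≤ (7/6)(‖x‖ + T‖v‖), max_{s ≤ T} ‖v_s‖ ≤ (7/6)LT‖x‖ + (6/5)‖v‖, and max_{s ≤ T} ‖v_s‖² ≤ (1/2)L‖x‖² + 3‖v‖². -/
open MeasureTheory intervalIntegral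

/-- A priori bounds for the exact Hamiltonian flow (h = 0 case of the Verlet
a priori estimates, under `L T² ≤ 1/6`). -/
theorem hamiltonian_flow_apriori_bounds {d : ℕ}
    (U : EuclideanSpace ℝ (Fin d) → ℝ)
    (gradU : EuclideanSpace ℝ (Fin d) → EuclideanSpace ℝ (Fin d))
    (hess : EuclideanSpace ℝ (Fin d) →
      (EuclideanSpace ℝ (Fin d) →L[ℝ] EuclideanSpace ℝ (Fin d)))
    (L T : ℝ)
    (hmin : ∀ x, U 0 ≤ U x) (hU0 : U 0 = 0)
    (hgrad : ∀ x, HasFDerivAt U ((innerSL ℝ) (gradU x)) x)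
    (hhess : ∀ x, HasFDerivAt gradU (hess x) x)
    (hL : ∀ x, ‖hess x‖ ≤ L)
    (hT : 0 < T) (hsmall : L * T^2 ≤ 1/6)
    (Q Vel : EuclideanSpace ℝ (Fin d) → EuclideanSpace ℝ (Fin d) → ℝ →
      EuclideanSpace ℝ (Fin d))
    (hQ : ∀ x v t, Q x v t = x + ∫ s in (0:ℝ)..t, Vel x v s)
    (hVel : ∀ x v t, Vel x v t = v - ∫ s in (0:ℝ)..t, gradU (Q x v s))
    (x v : EuclideanSpace ℝ (Fin d)) :
    (∀ s ∈ Set.Icc (0:ℝ) T, ‖Q x v s‖ ≤ (7/6) * (‖x‖ + T * ‖v‖)) ∧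
    (∀ s ∈ Set.Icc (0:ℝ) T, ‖Vel x v s‖ ≤ (7/6) * L * T * ‖x‖ + (6/5) * ‖v‖) ∧
    (∀ s ∈ Set.Icc (0:ℝ) T, ‖Vel x v s‖^2 ≤ (1/2) * L * ‖x‖^2 + 3 * ‖v‖^2) := by
  have hL0 : 0 ≤ L := le_trans (norm_nonneg _) (hL 0)
  have hT0 : 0 ≤ T := hT.le
  have hq : ∀ t, Q x v t = x + ∫ s in (0:ℝ)..t, Vel x v s := hQ x v
  have hw : ∀ t, Vel x v t = v - ∫ s in (0:ℝ)..t, gradU (Q x v s) := hVel x v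
  -- the gradient vanishes at the global minimum
  have hg0 : gradU 0 = 0 := by
    have hloc : IsLocalMin U 0 := Filter.Eventually.of_forall hmin
    have h0 : (innerSL ℝ) (gradU 0) = 0 := hloc.hasFDerivAt_eq_zero (hgrad 0)
    have h1 : (inner ℝ (gradU 0) (gradU 0) : ℝ) = 0 := by
      have := ContinuousLinearMap.ext_iff.mp h0 (gradU 0)
      simpa using this
    exact inner_self_eq_zero.mp h1
  -- `gradU` is `L`-Lipschitz relative to the origin
  have hlip : ∀ p, ‖gradU p‖ ≤ L * ‖p‖ := by
    intro p
    have := convex_univ.norm_image_sub_le_of_norm_hasFDerivWithin_le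
      (f := gradU) (f' := hess) (fun y _ => (hhess y).hasFDerivWithinAt)
      (fun y _ => hL y) (Set.mem_univ (0 : EuclideanSpace ℝ (Fin d))) (Set.mem_univ p)
    simpa [hg0] using this
  have hgc : Continuous gradU := continuous_iff_continuousAt.mpr fun p => (hhess p).continuousAt
  have hA0 : 0 ≤ ‖x‖ + T * ‖v‖ :=
    add_nonneg (norm_nonneg _) (mul_nonneg hT0 (norm_nonneg _))
  -- continuity of Q on [0,t] given integrability of Vel on [0,t]
  have hqcont : ∀ t, 0 ≤ t → IntervalIntegrable (Vel x v) volume 0 t →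
      ContinuousOn (Q x v) (Set.Icc 0 t) := by
    intro t ht0 hwi
    have hwi' : IntegrableOn (Vel x v) (Set.uIcc 0 t) volume := by
      rw [Set.uIcc_of_le ht0]
      exact (intervalIntegrable_iff_integrableOn_Icc_of_le ht0).mp hwi
    have h1 := intervalIntegral.continuousOn_primitive_interval (a := 0) (b := t)
      (μ := volume) hwi'
    have h2 : ContinuousOn (fun s => x + ∫ u in (0:ℝ)..s, Vel x v u) (Set.uIcc 0 t) :=
      continuousOn_const.add h1
    rw [Set.uIcc_of_le ht0] at h2
    exact h2.congr fun s _ => hq s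
  -- Step A: a priori estimate on any interval of integrability
  have stepA : ∀ t, t ∈ Set.Icc (0:ℝ) T →
      IntervalIntegrable (Vel x v) volume 0 t →
      IntervalIntegrable (fun s => gradU (Q x v s)) volume 0 t →
      ∀ s ∈ Set.Icc (0:ℝ) t,
        ‖Q x v s‖ ≤ 12/11 * (‖x‖ + T * ‖v‖) ∧
        ‖Vel x v s‖ ≤ ‖v‖ + L * (12/11 * (‖x‖ + T * ‖v‖)) * s := by
    rintro t ⟨ht0, htT⟩ hwi hgi
    have hqc : ContinuousOn (Q x v) (Set.Icc 0 t) := hqcont t ht0 hwi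
    obtain ⟨sm, hsm, hmax⟩ := isCompact_Icc.exists_isMaxOn
      (⟨0, Set.left_mem_Icc.mpr ht0⟩ : (Set.Icc (0:ℝ) t).Nonempty) hqc.norm
    set m := ‖Q x v sm‖ with hmdef
    have hm0 : 0 ≤ m := norm_nonneg _
    have hmax' : ∀ s ∈ Set.Icc (0:ℝ) t, ‖Q x v s‖ ≤ m := fun s hs => hmax hs
    have hwb : ∀ u ∈ Set.Icc (0:ℝ) t, ‖Vel x v u‖ ≤ ‖v‖ + L * m * u := by
      rintro u ⟨hu0, hut⟩
      rw [hw u]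
      refine le_trans (norm_sub_le _ _) ?_
      have hb : ∀ z ∈ Set.uIoc (0:ℝ) u, ‖gradU (Q x v z)‖ ≤ L * m := by
        intro z hz
        rw [Set.uIoc_of_le hu0] at hz
        exact le_trans (hlip _)
          (mul_le_mul_of_nonneg_left (hmax' z ⟨hz.1.le, hz.2.trans hut⟩) hL0)
      have h2 := intervalIntegral.norm_integral_le_of_norm_le_const hb
      rw [sub_zero, abs_of_nonneg hu0] at h2
      linarith
    obtain ⟨hsm0, hsmt⟩ := hsm
    have hwi2 : IntervalIntegrable (Vel x v) volume 0 sm :=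
      hwi.mono_set (by
        rw [Set.uIcc_of_le ht0, Set.uIcc_of_le hsm0]
        exact Set.Icc_subset_Icc le_rfl hsmt)
    have hcont_lin : Continuous fun u : ℝ => ‖v‖ + L * m * u :=
      continuous_const.add (continuous_const.mul continuous_id)
    have hkey : m ≤ ‖x‖ + (‖v‖ * sm + L * m * (sm^2/2)) := by
      have h1 : m ≤ ‖x‖ + ‖∫ u in (0:ℝ)..sm, Vel x v u‖ := by
        rw [hmdef, hq sm]; exact norm_add_le _ _
      have h2 : ‖∫ u in (0:ℝ)..sm, Vel x v u‖ ≤ ∫ u in (0:ℝ)..sm, ‖Vel x v u‖ :=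
        intervalIntegral.norm_integral_le_integral_norm hsm0
      have h3 : (∫ u in (0:ℝ)..sm, ‖Vel x v u‖) ≤ ∫ u in (0:ℝ)..sm, (‖v‖ + L * m * u) := by
        refine intervalIntegral.integral_mono_on hsm0 hwi2.norm
          (hcont_lin.intervalIntegrable _ _) ?_
        intro u hu
        exact hwb u ⟨hu.1, hu.2.trans hsmt⟩
      have h4 : (∫ u in (0:ℝ)..sm, (‖v‖ + L * m * u)) = ‖v‖ * sm + L * m * (sm^2/2) := by
        have hlin : Continuous fun u : ℝ => L * m * u := continuous_const.mul continuous_id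
        rw [intervalIntegral.integral_add intervalIntegrable_const
          (hlin.intervalIntegrable _ _),
          intervalIntegral.integral_const_mul, integral_id, intervalIntegral.integral_const,
          smul_eq_mul]
        ring
      linarith
    have hsmT : sm ≤ T := hsmt.trans htT
    have e2 : L * m * sm^2 ≤ L * m * T^2 :=
      mul_le_mul_of_nonneg_left (pow_le_pow_left₀ hsm0 hsmT 2) (mul_nonneg hL0 hm0)
    have e3 : L * T^2 * m ≤ (1/6) * m := mul_le_mul_of_nonneg_right hsmall hm0
    have e4 : ‖v‖ * sm ≤ ‖v‖ * T := mul_le_mul_of_nonneg_left hsmT (norm_nonneg v)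
    have hmA : m ≤ 12/11 * (‖x‖ + T * ‖v‖) := by nlinarith
    intro s hs
    refine ⟨(hmax' s hs).trans hmA, (hwb s hs).trans ?_⟩
    have : L * m * s ≤ L * (12/11 * (‖x‖ + T * ‖v‖)) * s :=
      mul_le_mul_of_nonneg_right (mul_le_mul_of_nonneg_left hmA hL0) hs.1
    linarith
  -- the set of good times
  set S := {t : ℝ | t ∈ Set.Icc (0:ℝ) T ∧ IntervalIntegrable (Vel x v) volume 0 t ∧
      IntervalIntegrable (fun s => gradU (Q x v s)) volume 0 t} with hSdef
  have h0S : (0:ℝ) ∈ S :=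
    ⟨Set.left_mem_Icc.mpr hT0, IntervalIntegrable.refl, IntervalIntegrable.refl⟩
  have hSne : S.Nonempty := ⟨0, h0S⟩
  have hbddS : BddAbove S := ⟨T, fun t ht => ht.1.2⟩
  set c := sSup S with hcdef
  have hc0 : 0 ≤ c := le_csSup hbddS h0S
  have hcT : c ≤ T := csSup_le hSne fun t ht => ht.1.2
  have hlow : ∀ s, 0 ≤ s → s < c →
      ‖Q x v s‖ ≤ 12/11 * (‖x‖ + T * ‖v‖) ∧
      ‖Vel x v s‖ ≤ ‖v‖ + L * (12/11 * (‖x‖ + T * ‖v‖)) * s := by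
    intro s hs0 hsc
    obtain ⟨t, htS, hst⟩ := exists_lt_of_lt_csSup hSne hsc
    exact stepA t htS.1 htS.2.1 htS.2.2 s ⟨hs0, hst.le⟩
  -- a.e. strong measurability on Ioo 0 c
  have haesm : ∀ f : ℝ → EuclideanSpace ℝ (Fin d),
      (∀ t, t ∈ S → IntervalIntegrable f volume 0 t) →
      AEStronglyMeasurable f (volume.restrict (Set.Ioo (0:ℝ) c)) := by
    intro f hf
    have hseq : ∀ n : ℕ, ∃ t ∈ S, c - 1/(n+1) < t := by
      intro n
      refine exists_lt_of_lt_csSup hSne ?_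
      have h1 : (0:ℝ) < 1/(n+1) := by positivity
      linarith
    choose t htS hlt using hseq
    have hsub : Set.Ioo (0:ℝ) c ⊆ ⋃ n : ℕ, Set.Ioc (0:ℝ) (t n) := by
      intro y hy
      obtain ⟨n, hn⟩ := exists_nat_one_div_lt (sub_pos.mpr hy.2)
      exact Set.mem_iUnion.mpr ⟨n, hy.1, by linarith [hlt n]⟩
    have hu : AEStronglyMeasurable f (volume.restrict (⋃ n : ℕ, Set.Ioc (0:ℝ) (t n))) := by
      rw [aestronglyMeasurable_iUnion_iff]
      intro n
      exact ((intervalIntegrable_iff_integrableOn_Ioc_of_le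
        (htS n).1.1).mp (hf (t n) (htS n))).aestronglyMeasurable
    exact hu.mono_measure (Measure.restrict_mono hsub le_rfl)
  -- integrability up to c from boundedness below c
  have hint : ∀ (f : ℝ → EuclideanSpace ℝ (Fin d)) (K : ℝ),
      (∀ t, t ∈ S → IntervalIntegrable f volume 0 t) →
      (∀ s, 0 ≤ s → s < c → ‖f s‖ ≤ K) →
      IntervalIntegrable f volume 0 c := by
    intro f K hf hK
    rw [intervalIntegrable_iff_integrableOn_Ioc_of_le hc0]
    have h1 : IntegrableOn f (Set.Ioo 0 c) volume := by
      refine Integrable.mono' (g := fun _ => K)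
        (integrableOn_const measure_Ioo_lt_top.ne) (haesm f hf) ?_
      refine (ae_restrict_iff' measurableSet_Ioo).mpr (Filter.Eventually.of_forall ?_)
      intro s hs
      exact hK s hs.1.le hs.2
    rwa [IntegrableOn, ← Measure.restrict_congr_set Ioo_ae_eq_Ioc]
  have hcS : c ∈ S := by
    refine ⟨⟨hc0, hcT⟩, ?_, ?_⟩
    · refine hint _ (‖v‖ + L * (12/11 * (‖x‖ + T * ‖v‖)) * T) (fun t ht => ht.2.1) ?_
      intro s hs0 hsc
      have h1 := (hlow s hs0 hsc).2
      have h2 : L * (12/11 * (‖x‖ + T * ‖v‖)) * s ≤ L * (12/11 * (‖x‖ + T * ‖v‖)) * T :=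
        mul_le_mul_of_nonneg_left (hsc.le.trans hcT)
          (mul_nonneg hL0 (by positivity))
      linarith
    · refine hint _ (L * (12/11 * (‖x‖ + T * ‖v‖))) (fun t ht => ht.2.2) ?_
      intro s hs0 hsc
      exact le_trans (hlip _) (mul_le_mul_of_nonneg_left (hlow s hs0 hsc).1 hL0)
  -- c = T
  have hTS : T ∈ S := by
    rcases eq_or_lt_of_le hcT with heq | hlt
    · rwa [heq] at hcS
    · exfalso
      by_cases hcase : ∃ t, t ∈ Set.Ioc c T ∧ IntervalIntegrable (Vel x v) volume 0 t
      · obtain ⟨t, ⟨hct, htT⟩, hwt⟩ := hcase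
        have ht0 : (0:ℝ) ≤ t := hc0.trans hct.le
        have hqc : ContinuousOn (Q x v) (Set.Icc 0 t) := hqcont t ht0 hwt
        have hgint : IntervalIntegrable (fun s => gradU (Q x v s)) volume 0 t := by
          apply ContinuousOn.intervalIntegrable
          rw [Set.uIcc_of_le ht0]
          exact hgc.comp_continuousOn hqc
        have htS : t ∈ S := ⟨⟨ht0, htT⟩, hwt, hgint⟩
        exact absurd (le_csSup hbddS htS) (not_le.mpr hct)
      · push_neg at hcase
        have hqconst : ∀ t, t ∈ Set.Ioc c T → Q x v t = x := by
          intro t ht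
          rw [hq t, intervalIntegral.integral_undef (hcase t ht), add_zero]
        have hgct : IntervalIntegrable (fun s => gradU (Q x v s)) volume c T := by
          rw [intervalIntegrable_iff_integrableOn_Ioc_of_le hlt.le]
          have hconst : IntegrableOn (fun _ : ℝ => gradU x) (Set.Ioc c T) volume :=
            integrableOn_const measure_Ioc_lt_top.ne
          refine hconst.congr_fun (fun s hs => ?_) measurableSet_Ioc
          exact (congrArg gradU (hqconst s hs)).symm
        have hgT : IntervalIntegrable (fun s => gradU (Q x v s)) volume 0 T :=
          hcS.2.2.trans hgct
        have hwcont : ContinuousOn (Vel x v) (Set.Icc 0 T) := by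
          have hgT' : IntegrableOn (fun s => gradU (Q x v s)) (Set.uIcc 0 T) volume := by
            rw [Set.uIcc_of_le hT0]
            exact (intervalIntegrable_iff_integrableOn_Icc_of_le hT0).mp hgT
          have h1 := intervalIntegral.continuousOn_primitive_interval (a := 0) (b := T)
            (μ := volume) hgT'
          have h2 : ContinuousOn (fun s => v - ∫ u in (0:ℝ)..s, gradU (Q x v u))
              (Set.uIcc 0 T) := continuousOn_const.sub h1
          rw [Set.uIcc_of_le hT0] at h2
          exact h2.congr fun s _ => hw s
        have hwT : IntervalIntegrable (Vel x v) volume 0 T := by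
          apply ContinuousOn.intervalIntegrable
          rwa [Set.uIcc_of_le hT0]
        exact hcase T ⟨hlt, le_rfl⟩ hwT
  -- conclusion
  have hmain := stepA T ⟨hT0, le_rfl⟩ hTS.2.1 hTS.2.2
  refine ⟨?_, ?_, ?_⟩
  · intro s hs
    have h1 := (hmain s hs).1
    nlinarith
  · intro s hs
    obtain ⟨hs0, hsT⟩ := hs
    have h1 := (hmain s ⟨hs0, hsT⟩).2
    have e1 : L * (12/11 * (‖x‖ + T * ‖v‖)) * s ≤ L * (12/11 * (‖x‖ + T * ‖v‖)) * T :=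
      mul_le_mul_of_nonneg_left hsT (mul_nonneg hL0 (by positivity))
    have e2 : L * T^2 * ‖v‖ ≤ (1/6) * ‖v‖ := mul_le_mul_of_nonneg_right hsmall (norm_nonneg v)
    have e3 : 0 ≤ L * T * ‖x‖ := mul_nonneg (mul_nonneg hL0 hT0) (norm_nonneg x)
    nlinarith [norm_nonneg v, norm_nonneg x]
  · intro s hs
    obtain ⟨hs0, hsT⟩ := hs
    have h1 := (hmain s ⟨hs0, hsT⟩).2
    have e1 : L * (12/11 * (‖x‖ + T * ‖v‖)) * s ≤ L * (12/11 * (‖x‖ + T * ‖v‖)) * T :=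
      mul_le_mul_of_nonneg_left hsT (mul_nonneg hL0 (by positivity))
    have e2 : L * T^2 * ‖v‖ ≤ (1/6) * ‖v‖ := mul_le_mul_of_nonneg_right hsmall (norm_nonneg v)
    have hb : ‖Vel x v s‖ ≤ 12/11 * L * T * ‖x‖ + 13/11 * ‖v‖ := by nlinarith
    have hbn : (0:ℝ) ≤ 12/11 * L * T * ‖x‖ + 13/11 * ‖v‖ := by positivity
    have hsq : ‖Vel x v s‖^2 ≤ (12/11 * L * T * ‖x‖ + 13/11 * ‖v‖)^2 :=
      pow_le_pow_left₀ (norm_nonneg _) hb 2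
    have e4 : L^2 * T^2 * ‖x‖^2 ≤ (1/6) * (L * ‖x‖^2) := by
      linarith [mul_le_mul_of_nonneg_right hsmall (mul_nonneg hL0 (sq_nonneg ‖x‖))]
    linarith [hsq, sq_nonneg (12/11 * L * T * ‖x‖ - 13/11 * ‖v‖),
      mul_nonneg hL0 (sq_nonneg ‖x‖), sq_nonneg ‖v‖]
end
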